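/- Let q, t be real numbers with 0 < q < 1 and t > 0, and let z : ℤ → ℝ be a family with ∑_{i∈ℤ} |z_i| < ∞ and q^2·max(t, t^{−1})·|z_i| < 1 for every i ∈ ℤ. Then the family ((2/k)·((t^k − t^{−k})/(q^k − q^{−k})^2)·z_i^k) indexed by pairs (k, i) with k a positive odd integer and i ∈ ℤ is summable, the family (m·log(((1 + q^{2m}·t·z_i)(1 − q^{2m}·t^{−1}·z_i))/((1 − q^{2m}·t·z_i)(1 + q^{2m}·t^{−1}·z_i)))) indexed by pairs (m, i) ∈ ℕ₊ × ℤ is summable, and ∑_{k odd, k≥1} (2/k)·((t^k − t^{−k})/(q^k − q^{−k})^2)·(∑_{i∈ℤ} z_i^k) = ∑_{m=1}^∞ ∑_{i∈ℤ} m·log(((1 + q^{2m}·t·z_i)(1 − q^{2m}·t^{−1}·z_i))/((1 − q^{2m}·t·z_i)(1 + q^{2m}·t^{−1}·z_i))). -/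

import Mathlib

open Real

private def oddEquiv : ℕ ≃ {k : ℕ // Odd k} where
  toFun n := ⟨2 * n + 1, ⟨n, by ring⟩⟩
  invFun k := (k : ℕ) / 2
  left_inv n := by simp only []; omega
  right_inv k := by
    have := Nat.odd_iff.mp k.2
    refine Subtype.ext ?_
    simp only
    omega

private lemma hasSum_pnat_mul_geometric {x : ℝ} (hx : |x| < 1) :
    HasSum (fun m : ℕ+ => ((m : ℕ) : ℝ) * x ^ (m : ℕ)) (x / (1 - x) ^ 2) := by
  have h : HasSum (fun n : ℕ => (n : ℝ) * x ^ n) (x / (1 - x) ^ 2) :=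
    hasSum_coe_mul_geometric_of_norm_lt_one (by simpa using hx)
  have hinj : Function.Injective (fun m : ℕ+ => (m : ℕ)) := fun a b h => PNat.coe_injective h
  refine (Function.Injective.hasSum_iff hinj ?_).mpr h
  intro n hn
  have hn0 : n = 0 := by
    by_contra h0
    exact hn ⟨⟨n, Nat.pos_of_ne_zero h0⟩, rfl⟩
  simp [hn0]

private lemma hasSum_log_odd {x : ℝ} (hx : |x| < 1) :
    HasSum (fun k : {k : ℕ // Odd k} => 2 / ((k : ℕ) : ℝ) * x ^ (k : ℕ))
      (Real.log ((1 + x) / (1 - x))) := by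
  obtain ⟨hx1, hx2⟩ := abs_lt.mp hx
  have h1 : (0:ℝ) < 1 + x := by linarith
  have h2 : (0:ℝ) < 1 - x := by linarith
  have h := hasSum_log_sub_log_of_abs_lt_one hx
  rw [← Real.log_div h1.ne' h2.ne'] at h
  have hfe : (fun n : ℕ => (2:ℝ) * (1 / (2 * n + 1)) * x ^ (2 * n + 1)) =
      (fun k : {k : ℕ // Odd k} => 2 / ((k : ℕ) : ℝ) * x ^ (k : ℕ)) ∘ oddEquiv := by
    funext n
    simp only [Function.comp_apply, oddEquiv, Equiv.coe_fn_mk]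
    push_cast
    ring_nf
  rw [hfe] at h
  exact oddEquiv.hasSum_iff.mp h

private noncomputable def Fml (q t : ℝ) (z : ℤ → ℝ) (p : {k : ℕ // Odd k} × ℕ+ × ℤ) : ℝ :=
  2 / ((p.1 : ℕ) : ℝ) * (t ^ (p.1 : ℕ) - t⁻¹ ^ (p.1 : ℕ)) *
    (((p.2.1 : ℕ) : ℝ) * q ^ (2 * (p.2.1 : ℕ) * (p.1 : ℕ))) * z p.2.2 ^ (p.1 : ℕ)

/-- The analytic identity underlying the infinite product formula for the orthogonal
Chern–Simons partition function of the unknot: for `0 < q < 1`, `t > 0`, and a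
summable family `z : ℤ → ℝ` with `q^2 * max(t, t⁻¹) * |z_i| < 1` for all `i`,
`∑_{k odd} (2/k) ((t^k - t^{-k})/(q^k - q^{-k})^2) pb_k(z)` equals
`∑_{m≥1} ∑_i m * log(((1+q^(2m) t z_i)(1-q^(2m) t⁻¹ z_i))/((1-q^(2m) t z_i)(1+q^(2m) t⁻¹ z_i)))`,
with all the relevant families summable. -/
theorem unknot_free_energy_eq_log_sum (q t : ℝ) (hq0 : 0 < q) (hq1 : q < 1)
    (ht : 0 < t) (z : ℤ → ℝ) (hz : Summable fun i : ℤ => |z i|)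
    (hzq : ∀ i : ℤ, q ^ 2 * max t t⁻¹ * |z i| < 1) :
    Summable (fun p : {k : ℕ // Odd k} × ℤ =>
      (2 / ((p.1 : ℕ) : ℝ)) *
        ((t ^ (p.1 : ℕ) - t⁻¹ ^ (p.1 : ℕ)) / (q ^ (p.1 : ℕ) - q⁻¹ ^ (p.1 : ℕ)) ^ 2) *
        z p.2 ^ (p.1 : ℕ)) ∧
    Summable (fun p : ℕ+ × ℤ =>
      ((p.1 : ℕ) : ℝ) * Real.log
        (((1 + q ^ (2 * (p.1 : ℕ)) * t * z p.2) * (1 - q ^ (2 * (p.1 : ℕ)) * t⁻¹ * z p.2)) /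
          ((1 - q ^ (2 * (p.1 : ℕ)) * t * z p.2) * (1 + q ^ (2 * (p.1 : ℕ)) * t⁻¹ * z p.2)))) ∧
    ∑' k : {k : ℕ // Odd k},
        (2 / ((k : ℕ) : ℝ)) *
          ((t ^ (k : ℕ) - t⁻¹ ^ (k : ℕ)) / (q ^ (k : ℕ) - q⁻¹ ^ (k : ℕ)) ^ 2) *
          (∑' i : ℤ, z i ^ (k : ℕ)) =
      ∑' m : ℕ+, ∑' i : ℤ,
        ((m : ℕ) : ℝ) * Real.log
          (((1 + q ^ (2 * (m : ℕ)) * t * z i) * (1 - q ^ (2 * (m : ℕ)) * t⁻¹ * z i)) /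
            ((1 - q ^ (2 * (m : ℕ)) * t * z i) * (1 + q ^ (2 * (m : ℕ)) * t⁻¹ * z i))) := by
  classical
  have hq : q ≠ 0 := ne_of_gt hq0
  set M := max t t⁻¹ with hMdef
  have hM1 : 1 ≤ M := by
    rcases le_total 1 t with h | h
    · exact le_trans h (le_max_left _ _)
    · have h' : 1 ≤ t⁻¹ := by
        nlinarith [inv_pos.mpr ht, mul_inv_cancel₀ (ne_of_gt ht)]
      exact le_trans h' (le_max_right _ _)
  have htM : t ≤ M := le_max_left _ _
  have htM' : t⁻¹ ≤ M := le_max_right _ _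
  have hM0 : (0:ℝ) < M := lt_of_lt_of_le one_pos hM1
  have hq2lt : q ^ 2 < 1 := pow_lt_one₀ hq0.le hq1 (by norm_num)
  have h1q2 : (0:ℝ) < 1 - q ^ 2 := by linarith
  have hc0 : (0:ℝ) < q ^ 2 * M := by positivity
  -- facts per odd k
  have hk1 : ∀ k : {k : ℕ // Odd k}, 1 ≤ (k : ℕ) := fun k => k.2.pos
  have hyk_pos : ∀ k : {k : ℕ // Odd k}, 0 < q ^ (2 * (k : ℕ)) := fun k => pow_pos hq0 _
  have hyk_lt : ∀ k : {k : ℕ // Odd k}, q ^ (2 * (k : ℕ)) < 1 :=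
    fun k => pow_lt_one₀ hq0.le hq1 (by have := hk1 k; omega)
  have hyk_le : ∀ k : {k : ℕ // Odd k}, q ^ (2 * (k : ℕ)) ≤ q ^ 2 :=
    fun k => pow_le_pow_of_le_one hq0.le hq1.le (by have := hk1 k; omega)
  have hknz : ∀ k : {k : ℕ // Odd k}, ((k : ℕ) : ℝ) ≠ 0 :=
    fun k => Nat.cast_ne_zero.mpr (by have := hk1 k; omega)
  have htk : ∀ k : {k : ℕ // Odd k}, |t ^ (k:ℕ) - t⁻¹ ^ (k:ℕ)| ≤ 2 * M ^ (k:ℕ) := by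
    intro k
    have h1 : t ^ (k:ℕ) ≤ M ^ (k:ℕ) := pow_le_pow_left₀ ht.le htM _
    have h2 : t⁻¹ ^ (k:ℕ) ≤ M ^ (k:ℕ) := pow_le_pow_left₀ (inv_pos.mpr ht).le htM' _
    have h3 : 0 < t ^ (k:ℕ) := pow_pos ht _
    have h4 : 0 < t⁻¹ ^ (k:ℕ) := pow_pos (inv_pos.mpr ht) _
    rw [abs_le]
    constructor <;> nlinarith
  have h2k : ∀ k : {k : ℕ // Odd k}, 2 / ((k:ℕ):ℝ) ≤ 2 := by
    intro k
    have h : (1:ℝ) ≤ ((k:ℕ):ℝ) := by exact_mod_cast hk1 k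
    rw [div_le_iff₀ (by linarith)]
    nlinarith
  -- the key algebraic identity for the q-denominator
  have hval : ∀ k : {k : ℕ // Odd k},
      (t ^ (k:ℕ) - t⁻¹ ^ (k:ℕ)) / (q ^ (k:ℕ) - q⁻¹ ^ (k:ℕ)) ^ 2 =
      (t ^ (k:ℕ) - t⁻¹ ^ (k:ℕ)) * (q ^ (2 * (k:ℕ)) / (1 - q ^ (2 * (k:ℕ))) ^ 2) := by
    intro k
    have hqk0 : q ^ (k:ℕ) ≠ 0 := pow_ne_zero _ hq
    have hy1 : (1:ℝ) - q ^ (2*(k:ℕ)) ≠ 0 := ne_of_gt (by linarith [hyk_lt k])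
    have hqklt : q ^ (k:ℕ) < 1 := pow_lt_one₀ hq0.le hq1 (by have := hk1 k; omega)
    have hinv1 : (1:ℝ) < q⁻¹ := ((one_lt_inv₀ hq0).mpr hq1)
    have hqkgt : (1:ℝ) < q⁻¹ ^ (k:ℕ) := one_lt_pow₀ hinv1 (by have := hk1 k; omega)
    have hd : q ^ (k:ℕ) - q⁻¹ ^ (k:ℕ) ≠ 0 := ne_of_lt (by linarith)
    have hsq : (q ^ (k:ℕ) - q⁻¹ ^ (k:ℕ)) ^ 2 = (1 - q ^ (2*(k:ℕ))) ^ 2 / q ^ (2*(k:ℕ)) := by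
      rw [inv_pow, show (2 * (k:ℕ)) = (k:ℕ) * 2 by ring, pow_mul]
      field_simp
      ring
    rw [hsq, div_div_eq_mul_div, mul_div_assoc]
  -- geometric slice over m, for fixed (k, i)
  have hslice : ∀ (k : {k : ℕ // Odd k}) (i : ℤ),
      HasSum (fun m : ℕ+ => Fml q t z (k, m, i))
        (2 / ((k:ℕ):ℝ) * (t ^ (k:ℕ) - t⁻¹ ^ (k:ℕ)) *
          (q ^ (2*(k:ℕ)) / (1 - q ^ (2*(k:ℕ))) ^ 2) * z i ^ (k:ℕ)) := by
    intro k i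
    have hlt : |q ^ (2*(k:ℕ))| < 1 := by
      rw [abs_of_pos (hyk_pos k)]; exact hyk_lt k
    have h := ((hasSum_pnat_mul_geometric hlt).mul_left
        (2 / ((k:ℕ):ℝ) * (t ^ (k:ℕ) - t⁻¹ ^ (k:ℕ)))).mul_right (z i ^ (k:ℕ))
    have hfun : (fun m : ℕ+ => 2 / ((k:ℕ):ℝ) * (t ^ (k:ℕ) - t⁻¹ ^ (k:ℕ)) *
        (((m:ℕ):ℝ) * (q ^ (2*(k:ℕ))) ^ (m:ℕ)) * z i ^ (k:ℕ)) =
        (fun m : ℕ+ => Fml q t z (k, m, i)) := by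
      funext m
      simp only [Fml]
      rw [← pow_mul]
      ring_nf
    rwa [hfun] at h
  -- the slice rewritten with the q-denominator
  have hslice' : ∀ (k : {k : ℕ // Odd k}) (i : ℤ),
      HasSum (fun m : ℕ+ => Fml q t z (k, m, i))
        (2 / ((k:ℕ):ℝ) * ((t ^ (k:ℕ) - t⁻¹ ^ (k:ℕ)) / (q ^ (k:ℕ) - q⁻¹ ^ (k:ℕ)) ^ 2) *
          z i ^ (k:ℕ)) := by
    intro k i
    have h := hslice k i
    have heq : 2 / ((k:ℕ):ℝ) * (t ^ (k:ℕ) - t⁻¹ ^ (k:ℕ)) *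
        (q ^ (2*(k:ℕ)) / (1 - q ^ (2*(k:ℕ))) ^ 2) * z i ^ (k:ℕ)
        = 2 / ((k:ℕ):ℝ) * ((t ^ (k:ℕ) - t⁻¹ ^ (k:ℕ)) / (q ^ (k:ℕ) - q⁻¹ ^ (k:ℕ)) ^ 2) *
          z i ^ (k:ℕ) := by
      rw [hval k]; ring
    rwa [heq] at h
  -- z_i^k is summable in i
  have hzB : ∀ i, |z i| ≤ (q ^ 2 * M)⁻¹ := by
    intro i
    have h := hzq i
    have h2 : q ^ 2 * M * |z i| < q ^ 2 * M * (q ^ 2 * M)⁻¹ := by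
      rw [mul_inv_cancel₀ (ne_of_gt hc0)]; exact h
    exact le_of_lt (lt_of_mul_lt_mul_left h2 hc0.le)
  have hZk : ∀ k : {k : ℕ // Odd k}, Summable fun i : ℤ => z i ^ (k:ℕ) := by
    intro k
    refine Summable.of_abs ?_
    refine Summable.of_nonneg_of_le (fun i => abs_nonneg _) (fun i => ?_)
      (hz.mul_left ((q ^ 2 * M)⁻¹ ^ ((k:ℕ) - 1)))
    rw [abs_pow]
    calc |z i| ^ (k:ℕ) = |z i| ^ ((k:ℕ) - 1) * |z i| := by
          rw [← pow_succ]; congr 1; have := hk1 k; omega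
    _ ≤ (q ^ 2 * M)⁻¹ ^ ((k:ℕ) - 1) * |z i| :=
          mul_le_mul_of_nonneg_right (pow_le_pow_left₀ (abs_nonneg _) (hzB i) _) (abs_nonneg _)
  -- geometric series for the absolute values over m
  have habs_slice : ∀ (k : {k : ℕ // Odd k}) (i : ℤ),
      HasSum (fun m : ℕ+ => |Fml q t z (k, m, i)|)
        (|2 / ((k:ℕ):ℝ) * (t ^ (k:ℕ) - t⁻¹ ^ (k:ℕ)) * z i ^ (k:ℕ)| *
          (q ^ (2*(k:ℕ)) / (1 - q ^ (2*(k:ℕ))) ^ 2)) := by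
    intro k i
    have hlt : |q ^ (2*(k:ℕ))| < 1 := by
      rw [abs_of_pos (hyk_pos k)]; exact hyk_lt k
    have h := (hasSum_pnat_mul_geometric hlt).mul_left
        (|2 / ((k:ℕ):ℝ) * (t ^ (k:ℕ) - t⁻¹ ^ (k:ℕ)) * z i ^ (k:ℕ)|)
    have hfun : (fun m : ℕ+ => |2 / ((k:ℕ):ℝ) * (t ^ (k:ℕ) - t⁻¹ ^ (k:ℕ)) * z i ^ (k:ℕ)| *
        (((m:ℕ):ℝ) * (q ^ (2*(k:ℕ))) ^ (m:ℕ))) =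
        (fun m : ℕ+ => |Fml q t z (k, m, i)|) := by
      funext m
      simp only [Fml, abs_mul, abs_pow, abs_div, Nat.abs_cast, abs_two, abs_of_pos hq0,
        ← pow_mul]
      ring_nf
    rwa [hfun] at h
  -- bound for the tsum over m
  have hbnd : ∀ (k : {k : ℕ // Odd k}) (i : ℤ),
      (∑' m : ℕ+, |Fml q t z (k, m, i)|) ≤
        4 / (1 - q ^ 2) ^ 2 * (q ^ 2 * M * |z i|) ^ (k:ℕ) := by
    intro k i
    rw [(habs_slice k i).tsum_eq]
    have hb1 : |2 / ((k:ℕ):ℝ) * (t ^ (k:ℕ) - t⁻¹ ^ (k:ℕ)) * z i ^ (k:ℕ)| ≤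
        2 * (2 * M ^ (k:ℕ)) * |z i| ^ (k:ℕ) := by
      rw [abs_mul, abs_mul, abs_pow]
      have h0 : |2 / ((k:ℕ):ℝ)| ≤ 2 := by
        rw [abs_of_nonneg (by positivity)]; exact h2k k
      have := htk k
      have hM' : (0:ℝ) ≤ M ^ (k:ℕ) := by positivity
      refine mul_le_mul_of_nonneg_right ?_ (pow_nonneg (abs_nonneg _) _)
      exact mul_le_mul h0 (htk k) (abs_nonneg _) (by norm_num)
    have hb2 : q ^ (2*(k:ℕ)) / (1 - q ^ (2*(k:ℕ))) ^ 2 ≤ (q ^ 2) ^ (k:ℕ) / (1 - q ^ 2) ^ 2 := by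
      rw [show (2*(k:ℕ)) = 2*(k:ℕ) from rfl, pow_mul]
      refine div_le_div_of_nonneg_left (by positivity) (by positivity) ?_
      have h1 : 1 - q ^ 2 ≤ 1 - (q ^ 2) ^ (k:ℕ) := by
        have := hyk_le k
        rw [pow_mul] at this
        linarith
      exact pow_le_pow_left₀ h1q2.le h1 2
    calc |2 / ((k:ℕ):ℝ) * (t ^ (k:ℕ) - t⁻¹ ^ (k:ℕ)) * z i ^ (k:ℕ)| *
          (q ^ (2*(k:ℕ)) / (1 - q ^ (2*(k:ℕ))) ^ 2)
        ≤ (2 * (2 * M ^ (k:ℕ)) * |z i| ^ (k:ℕ)) * ((q ^ 2) ^ (k:ℕ) / (1 - q ^ 2) ^ 2) :=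
          mul_le_mul hb1 hb2 (by positivity) (by positivity)
      _ = 4 / (1 - q ^ 2) ^ 2 * (q ^ 2 * M * |z i|) ^ (k:ℕ) := by
          rw [mul_pow, mul_pow]; ring
  -- geometric comparison over odd k
  have hgeo : ∀ i : ℤ, Summable (fun k : {k : ℕ // Odd k} =>
      4 / (1 - q ^ 2) ^ 2 * (q ^ 2 * M * |z i|) ^ (k:ℕ)) := by
    intro i
    have h : Summable (fun n : ℕ => 4 / (1 - q ^ 2) ^ 2 * (q ^ 2 * M * |z i|) ^ n) :=
      (summable_geometric_of_lt_one (by positivity) (hzq i)).mul_left _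
    exact h.subtype _
  -- double summability over (k, m) for fixed i
  have hdouble : ∀ i : ℤ, Summable (fun km : {k : ℕ // Odd k} × ℕ+ =>
      |Fml q t z (km.1, km.2, i)|) := by
    intro i
    refine (summable_prod_of_nonneg (fun _ => abs_nonneg _)).mpr
      ⟨fun k => (habs_slice k i).summable, ?_⟩
    exact Summable.of_nonneg_of_le (fun k => tsum_nonneg fun m => abs_nonneg _)
      (fun k => hbnd k i) (hgeo i)
  -- bound for the double tsum, summable in i
  have htsum_bound : ∀ i : ℤ, (∑' km : {k : ℕ // Odd k} × ℕ+, |Fml q t z (km.1, km.2, i)|) ≤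
      4 / (1 - q ^ 2) ^ 2 * (q ^ 2 * M * |z i|) * (1 - q ^ 2 * M * |z i|)⁻¹ := by
    intro i
    rw [Summable.tsum_prod' (hdouble i) (fun k => (habs_slice k i).summable)]
    have hle : (∑' k : {k : ℕ // Odd k}, ∑' m : ℕ+, |Fml q t z (k, m, i)|) ≤
        ∑' n : ℕ, 4 / (1 - q ^ 2) ^ 2 * (q ^ 2 * M * |z i|) * (q ^ 2 * M * |z i|) ^ n := by
      refine Summable.tsum_le_tsum_of_inj (fun k => (k : ℕ) - 1)
        (fun k₁ k₂ h => ?_) (fun n _ => by positivity) (fun k => ?_)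
        (((summable_prod_of_nonneg (fun _ => abs_nonneg _)).mp (hdouble i)).2)
        (((summable_geometric_of_lt_one (by positivity) (hzq i)).mul_left _))
      · have h' : (k₁ : ℕ) - 1 = (k₂ : ℕ) - 1 := h
        have h1 := Nat.odd_iff.mp k₁.2
        have h2 := Nat.odd_iff.mp k₂.2
        exact Subtype.ext (by omega)
      · refine le_trans (hbnd k i) (le_of_eq ?_)
        obtain ⟨n, hn⟩ := k.2
        have hsub : (k:ℕ) - 1 = 2 * n := by omega
        show 4 / (1 - q ^ 2) ^ 2 * (q ^ 2 * M * |z i|) ^ (k:ℕ) =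
          4 / (1 - q ^ 2) ^ 2 * (q ^ 2 * M * |z i|) * (q ^ 2 * M * |z i|) ^ ((k:ℕ) - 1)
        rw [hsub, hn, pow_succ]
        ring
    refine le_trans hle (le_of_eq ?_)
    rw [tsum_mul_left, tsum_geometric_of_lt_one (by positivity) (hzq i)]
  -- summability of the bound in i
  have hg_sum : Summable (fun i : ℤ =>
      4 / (1 - q ^ 2) ^ 2 * (q ^ 2 * M * |z i|) * (1 - q ^ 2 * M * |z i|)⁻¹) := by
    have hev : ∀ᶠ i in Filter.cofinite, |z i| < (2 * (q ^ 2 * M))⁻¹ :=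
      hz.tendsto_cofinite_zero.eventually_lt_const (by positivity)
    have hfin : {i : ℤ | ¬ |z i| < (2 * (q ^ 2 * M))⁻¹}.Finite :=
      Filter.eventually_cofinite.mp hev
    rw [← hfin.summable_compl_iff]
    refine Summable.of_nonneg_of_le (fun i => ?_) (fun i => ?_)
      ((hz.mul_left (4 / (1 - q ^ 2) ^ 2 * (q ^ 2 * M) * 2)).subtype _)
    · have h := hzq (i : ℤ)
      have hp : (0:ℝ) < 1 - q ^ 2 * M * |z (i : ℤ)| := by linarith
      exact mul_nonneg (by positivity) (inv_nonneg.mpr hp.le)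
    · have hi : |z (i : ℤ)| < (2 * (q ^ 2 * M))⁻¹ := by
        have := i.2
        simp only [Set.mem_compl_iff, Set.mem_setOf_eq, not_not] at this
        exact this
      have hr2 : q ^ 2 * M * |z (i : ℤ)| ≤ 1 / 2 := by
        have h2 : q ^ 2 * M * |z (i : ℤ)| ≤ q ^ 2 * M * (2 * (q ^ 2 * M))⁻¹ :=
          mul_le_mul_of_nonneg_left hi.le hc0.le
        have h3 : q ^ 2 * M * (2 * (q ^ 2 * M))⁻¹ = 1 / 2 := by
          rw [mul_inv, ← mul_assoc, mul_comm (q ^ 2 * M) ((2:ℝ)⁻¹), mul_assoc,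
            mul_inv_cancel₀ (ne_of_gt hc0), mul_one, one_div]
        linarith
      have hpos : (0:ℝ) < 1 - q ^ 2 * M * |z (i : ℤ)| := by linarith
      have hinv : (1 - q ^ 2 * M * |z (i : ℤ)|)⁻¹ ≤ 2 := by
        have h4 := one_div_le_one_div_of_le (by norm_num : (0:ℝ) < 1/2)
          (by linarith : (1:ℝ)/2 ≤ 1 - q ^ 2 * M * |z (i : ℤ)|)
        rw [one_div] at h4
        norm_num at h4
        linarith
      calc 4 / (1 - q ^ 2) ^ 2 * (q ^ 2 * M * |z (i : ℤ)|) *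
            (1 - q ^ 2 * M * |z (i : ℤ)|)⁻¹
          ≤ 4 / (1 - q ^ 2) ^ 2 * (q ^ 2 * M * |z (i : ℤ)|) * 2 := by
            refine mul_le_mul_of_nonneg_left hinv ?_
            positivity
        _ = 4 / (1 - q ^ 2) ^ 2 * (q ^ 2 * M) * 2 * |z (i : ℤ)| := by ring
  -- master summability
  have habsF : Summable fun p : ℤ × ({k : ℕ // Odd k} × ℕ+) =>
      |Fml q t z (p.2.1, p.2.2, p.1)| := by
    refine (summable_prod_of_nonneg (fun _ => abs_nonneg _)).mpr ⟨fun i => hdouble i, ?_⟩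
    exact Summable.of_nonneg_of_le (fun i => tsum_nonneg fun _ => abs_nonneg _)
      (fun i => htsum_bound i) hg_sum
  have hF : Summable (Fml q t z) := by
    let e : ({k : ℕ // Odd k} × ℕ+ × ℤ) ≃ (ℤ × ({k : ℕ // Odd k} × ℕ+)) :=
      ⟨fun p => (p.2.2, p.1, p.2.1), fun p => (p.2.1, p.2.2, p.1),
        fun p => rfl, fun p => rfl⟩
    have h := e.summable_iff.mpr habsF
    have h' : Summable fun p : {k : ℕ // Odd k} × ℕ+ × ℤ => |Fml q t z p| :=
      h.congr (fun p => rfl)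
    exact h'.of_abs
  -- the log expansion over odd k, for fixed (m, i)
  have hLog : ∀ (m : ℕ+) (i : ℤ),
      HasSum (fun k : {k : ℕ // Odd k} => Fml q t z (k, m, i))
        (((m : ℕ) : ℝ) * Real.log
          (((1 + q ^ (2 * (m : ℕ)) * t * z i) * (1 - q ^ (2 * (m : ℕ)) * t⁻¹ * z i)) /
            ((1 - q ^ (2 * (m : ℕ)) * t * z i) * (1 + q ^ (2 * (m : ℕ)) * t⁻¹ * z i)))) := by
    intro m i
    have hm1 : 1 ≤ (m : ℕ) := m.one_le
    have hqm : q ^ (2 * (m : ℕ)) ≤ q ^ 2 :=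
      pow_le_pow_of_le_one hq0.le hq1.le (by omega)
    have hqm0 : 0 < q ^ (2 * (m : ℕ)) := pow_pos hq0 _
    have ha : |q ^ (2 * (m : ℕ)) * t * z i| < 1 := by
      rw [abs_mul, abs_mul, abs_of_pos hqm0, abs_of_pos ht]
      calc q ^ (2 * (m : ℕ)) * t * |z i| ≤ q ^ 2 * M * |z i| := by
            refine mul_le_mul_of_nonneg_right ?_ (abs_nonneg _)
            exact mul_le_mul hqm htM ht.le (by positivity)
        _ < 1 := hzq i
    have hb : |q ^ (2 * (m : ℕ)) * t⁻¹ * z i| < 1 := by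
      rw [abs_mul, abs_mul, abs_of_pos hqm0, abs_of_pos (inv_pos.mpr ht)]
      calc q ^ (2 * (m : ℕ)) * t⁻¹ * |z i| ≤ q ^ 2 * M * |z i| := by
            refine mul_le_mul_of_nonneg_right ?_ (abs_nonneg _)
            exact mul_le_mul hqm htM' (inv_pos.mpr ht).le (by positivity)
        _ < 1 := hzq i
    have h1 := hasSum_log_odd ha
    have h2 := hasSum_log_odd hb
    have h := (h1.sub h2).mul_left (((m : ℕ) : ℝ))
    obtain ⟨ha1, ha2⟩ := abs_lt.mp ha
    obtain ⟨hb1, hb2⟩ := abs_lt.mp hb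
    have hpa1 : (0:ℝ) < 1 + q ^ (2 * (m : ℕ)) * t * z i := by linarith
    have hpa2 : (0:ℝ) < 1 - q ^ (2 * (m : ℕ)) * t * z i := by linarith
    have hpb1 : (0:ℝ) < 1 + q ^ (2 * (m : ℕ)) * t⁻¹ * z i := by linarith
    have hpb2 : (0:ℝ) < 1 - q ^ (2 * (m : ℕ)) * t⁻¹ * z i := by linarith
    have hfun : (fun k : {k : ℕ // Odd k} => ((m : ℕ) : ℝ) *
        (2 / ((k:ℕ):ℝ) * (q ^ (2 * (m : ℕ)) * t * z i) ^ (k:ℕ) -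
          2 / ((k:ℕ):ℝ) * (q ^ (2 * (m : ℕ)) * t⁻¹ * z i) ^ (k:ℕ))) =
        (fun k : {k : ℕ // Odd k} => Fml q t z (k, m, i)) := by
      funext k
      simp only [Fml, mul_pow, ← pow_mul]
      ring
    have hvaleq : Real.log ((1 + q ^ (2 * (m : ℕ)) * t * z i) /
          (1 - q ^ (2 * (m : ℕ)) * t * z i)) -
        Real.log ((1 + q ^ (2 * (m : ℕ)) * t⁻¹ * z i) /
          (1 - q ^ (2 * (m : ℕ)) * t⁻¹ * z i)) =
        Real.log (((1 + q ^ (2 * (m : ℕ)) * t * z i) * (1 - q ^ (2 * (m : ℕ)) * t⁻¹ * z i)) /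
          ((1 - q ^ (2 * (m : ℕ)) * t * z i) * (1 + q ^ (2 * (m : ℕ)) * t⁻¹ * z i))) := by
      rw [Real.log_div hpa1.ne' hpa2.ne', Real.log_div hpb1.ne' hpb2.ne',
        Real.log_div (by positivity) (by positivity),
        Real.log_mul hpa1.ne' hpb2.ne', Real.log_mul hpa2.ne' hpb1.ne']
      ring
    rw [hfun, hvaleq] at h
    exact h
  -- conjunct 1
  have hsum1 : Summable (fun p : {k : ℕ // Odd k} × ℤ =>
      (2 / ((p.1 : ℕ) : ℝ)) *
        ((t ^ (p.1 : ℕ) - t⁻¹ ^ (p.1 : ℕ)) / (q ^ (p.1 : ℕ) - q⁻¹ ^ (p.1 : ℕ)) ^ 2) *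
        z p.2 ^ (p.1 : ℕ)) := by
    let e2 : (({k : ℕ // Odd k} × ℤ) × ℕ+) ≃ ({k : ℕ // Odd k} × ℕ+ × ℤ) :=
      ⟨fun p => (p.1.1, p.2, p.1.2), fun p => ((p.1, p.2.2), p.2.1),
        fun p => rfl, fun p => rfl⟩
    have hF2 := e2.summable_iff.mpr hF
    have hF2' : Summable fun p : ({k : ℕ // Odd k} × ℤ) × ℕ+ =>
        Fml q t z (p.1.1, p.2, p.1.2) := hF2.congr (fun p => rfl)
    exact (hF2'.hasSum.prod_fiberwise (fun ki => hslice' ki.1 ki.2)).summable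
  -- conjunct 2 and the RHS has-sum
  let e3 : ((ℕ+ × ℤ) × {k : ℕ // Odd k}) ≃ ({k : ℕ // Odd k} × ℕ+ × ℤ) :=
    ⟨fun p => (p.2, p.1.1, p.1.2), fun p => ((p.2.1, p.2.2), p.1),
      fun p => rfl, fun p => rfl⟩
  have hF3pre := e3.summable_iff.mpr hF
  have hF3 : Summable fun p : (ℕ+ × ℤ) × {k : ℕ // Odd k} =>
      Fml q t z (p.2, p.1.1, p.1.2) := hF3pre.congr (fun p => rfl)
  have hT2 : HasSum (fun mi : ℕ+ × ℤ =>
      ((mi.1 : ℕ) : ℝ) * Real.log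
        (((1 + q ^ (2 * (mi.1 : ℕ)) * t * z mi.2) * (1 - q ^ (2 * (mi.1 : ℕ)) * t⁻¹ * z mi.2)) /
          ((1 - q ^ (2 * (mi.1 : ℕ)) * t * z mi.2) *
            (1 + q ^ (2 * (mi.1 : ℕ)) * t⁻¹ * z mi.2))))
      (∑' p : (ℕ+ × ℤ) × {k : ℕ // Odd k}, Fml q t z (p.2, p.1.1, p.1.2)) :=
    hF3.hasSum.prod_fiberwise (fun mi => hLog mi.1 mi.2)
  -- LHS has-sum
  have hLHS : HasSum (fun k : {k : ℕ // Odd k} =>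
      (2 / ((k : ℕ) : ℝ)) *
        ((t ^ (k : ℕ) - t⁻¹ ^ (k : ℕ)) / (q ^ (k : ℕ) - q⁻¹ ^ (k : ℕ)) ^ 2) *
        (∑' i : ℤ, z i ^ (k : ℕ)))
      (∑' p : {k : ℕ // Odd k} × ℕ+ × ℤ, Fml q t z p) := by
    refine hF.hasSum.prod_fiberwise (fun k => ?_)
    have hy : |q ^ (2 * (k:ℕ))| < 1 := by
      rw [abs_of_pos (hyk_pos k)]; exact hyk_lt k
    have hfun : ∀ mi : ℕ+ × ℤ, Fml q t z (k, mi.1, mi.2) =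
        2 / ((k:ℕ):ℝ) * (t ^ (k:ℕ) - t⁻¹ ^ (k:ℕ)) *
          (((mi.1 : ℕ) : ℝ) * (q ^ (2 * (k:ℕ))) ^ (mi.1 : ℕ)) * z mi.2 ^ (k:ℕ) := by
      intro mi
      simp only [Fml]
      rw [← pow_mul]
      ring
    have hsummul : Summable (fun mi : ℕ+ × ℤ =>
        2 / ((k:ℕ):ℝ) * (t ^ (k:ℕ) - t⁻¹ ^ (k:ℕ)) *
          (((mi.1 : ℕ) : ℝ) * (q ^ (2 * (k:ℕ))) ^ (mi.1 : ℕ)) * z mi.2 ^ (k:ℕ)) :=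
      (hF.prod_factor k).congr hfun
    have hprod := ((hasSum_pnat_mul_geometric hy).mul_left
        (2 / ((k:ℕ):ℝ) * (t ^ (k:ℕ) - t⁻¹ ^ (k:ℕ)))).mul (hZk k).hasSum hsummul
    have hfe : (fun mi : ℕ+ × ℤ =>
        2 / ((k:ℕ):ℝ) * (t ^ (k:ℕ) - t⁻¹ ^ (k:ℕ)) *
          (((mi.1 : ℕ) : ℝ) * (q ^ (2 * (k:ℕ))) ^ (mi.1 : ℕ)) * z mi.2 ^ (k:ℕ)) =
        (fun mi : ℕ+ × ℤ => Fml q t z (k, mi.1, mi.2)) := by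
      funext mi
      exact (hfun mi).symm
    have hveq : 2 / ((k:ℕ):ℝ) * (t ^ (k:ℕ) - t⁻¹ ^ (k:ℕ)) *
        (q ^ (2 * (k:ℕ)) / (1 - q ^ (2 * (k:ℕ))) ^ 2) * (∑' i : ℤ, z i ^ (k:ℕ)) =
        2 / ((k:ℕ):ℝ) * ((t ^ (k:ℕ) - t⁻¹ ^ (k:ℕ)) / (q ^ (k:ℕ) - q⁻¹ ^ (k:ℕ)) ^ 2) *
          (∑' i : ℤ, z i ^ (k:ℕ)) := by
      rw [hval k]; ring
    rw [hfe, hveq] at hprod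
    exact hprod
  refine ⟨hsum1, hT2.summable, ?_⟩
  calc ∑' k : {k : ℕ // Odd k},
        (2 / ((k : ℕ) : ℝ)) *
          ((t ^ (k : ℕ) - t⁻¹ ^ (k : ℕ)) / (q ^ (k : ℕ) - q⁻¹ ^ (k : ℕ)) ^ 2) *
          (∑' i : ℤ, z i ^ (k : ℕ))
      = ∑' p : {k : ℕ // Odd k} × ℕ+ × ℤ, Fml q t z p := hLHS.tsum_eq
    _ = ∑' p : (ℕ+ × ℤ) × {k : ℕ // Odd k}, Fml q t z (p.2, p.1.1, p.1.2) := by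
        rw [← Equiv.tsum_eq e3 (Fml q t z)]
        exact tsum_congr fun p => rfl
    _ = ∑' mi : ℕ+ × ℤ,
        ((mi.1 : ℕ) : ℝ) * Real.log
          (((1 + q ^ (2 * (mi.1 : ℕ)) * t * z mi.2) *
              (1 - q ^ (2 * (mi.1 : ℕ)) * t⁻¹ * z mi.2)) /
            ((1 - q ^ (2 * (mi.1 : ℕ)) * t * z mi.2) *
              (1 + q ^ (2 * (mi.1 : ℕ)) * t⁻¹ * z mi.2))) := hT2.tsum_eq.symm
    _ = ∑' m : ℕ+, ∑' i : ℤ,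
        ((m : ℕ) : ℝ) * Real.log
          (((1 + q ^ (2 * (m : ℕ)) * t * z i) * (1 - q ^ (2 * (m : ℕ)) * t⁻¹ * z i)) /
            ((1 - q ^ (2 * (m : ℕ)) * t * z i) * (1 + q ^ (2 * (m : ℕ)) * t⁻¹ * z i))) :=
        Summable.tsum_prod' hT2.summable hT2.summable.prod_factor
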